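/- Let (G, I, R, ι, ub) be an instance of anonymous refugee housing with upper-bounds and let X ⊆ V_U be any set of empty vertices. Then there exists an inhabitants-respecting housing of size R in (G, I, R, ι, ub) if and only if there exists a subset S ⊆ X with |S| ≤ R such that (i) for every inhabitant h ∈ I, |S ∩ N_G(ι(h))| ≤ ub(h), and (ii) the instance on the graph G \ X with inhabitant set I, assignment ι, R − |S| refugees, and modified upper-bounds ub'(h) = ub(h) − |S ∩ N_G(ι(h))| admits an inhabitants-respecting housing of size R − |S|. -/
import Mathlib


/-- Branching correctness for the feedback-edge-set
algorithm.  Let `X ⊆ V_U` be any set of empty vertices and let `G'` be the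
induced subgraph of `G` on `V \ X` (the occupied vertices survive, via
`ι'`).  Then the instance admits an inhabitants-respecting housing of size
`R` iff there is `S ⊆ X` with `|S| ≤ R` such that (i) `|S ∩ N(ι h)| ≤ ub h`
for every inhabitant `h`, and (ii) the instance on `G \ X` with `R − |S|`
refugees and upper-bounds `ub h − |S ∩ N(ι h)|` admits an
inhabitants-respecting housing of size `R − |S|`. -/
theorem branching_on_empty_vertices
    {V I : Type*} [Fintype V] [DecidableEq V] [Fintype I] [DecidableEq I]
    (G : SimpleGraph V) [DecidableRel G.Adj]
    (ι : I → V) (hinj : Function.Injective ι)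
    (ub : I → ℕ) (R : ℕ)
    (hsize : Fintype.card I + R ≤ Fintype.card V)
    (X : Finset V) (hX : ∀ v ∈ X, ∀ h : I, ι h ≠ v)
    (G' : SimpleGraph {v : V // v ∉ X}) [DecidableRel G'.Adj]
    (hG' : ∀ u v : {v : V // v ∉ X}, G'.Adj u v ↔ G.Adj u.1 v.1)
    (ι' : I → {v : V // v ∉ X}) (hι' : ∀ h : I, (ι' h).1 = ι h) :
    (∃ π : Finset V,
        (∀ v ∈ π, ∀ h : I, ι h ≠ v) ∧ π.card = R ∧
        ∀ h : I, (π.filter (fun v => G.Adj (ι h) v)).card ≤ ub h) ↔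
    (∃ S : Finset V, S ⊆ X ∧ S.card ≤ R ∧
        (∀ h : I, (S.filter (fun v => G.Adj (ι h) v)).card ≤ ub h) ∧
        ∃ π' : Finset {v : V // v ∉ X},
          (∀ v ∈ π', ∀ h : I, ι h ≠ v.1) ∧ π'.card = R - S.card ∧
          ∀ h : I, (π'.filter (fun v => G'.Adj (ι' h) v)).card ≤
              ub h - (S.filter (fun v => G.Adj (ι h) v)).card) := by
  classical
  have hadj : ∀ (h : I) (v : {v : V // v ∉ X}),
      G'.Adj (ι' h) v ↔ G.Adj (ι h) v.1 := by
    intro h v; rw [hG', hι']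
  constructor
  · rintro ⟨π, hempty, hcard, hub⟩
    have hsub : π ∩ X ⊆ π := Finset.inter_subset_left
    -- key filter splitting
    have hsplit : ∀ h : I, (π.filter (fun v => G.Adj (ι h) v)).card =
        ((π ∩ X).filter (fun v => G.Adj (ι h) v)).card +
        ((π \ X).filter (fun v => G.Adj (ι h) v)).card := by
      intro h
      have hU : π ∩ X ∪ π \ X = π := by
        ext v; simp only [Finset.mem_union, Finset.mem_inter, Finset.mem_sdiff]; tauto
      rw [← Finset.card_union_of_disjoint, ← Finset.filter_union, hU]
      exact Finset.disjoint_filter_filter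
        (Finset.disjoint_sdiff_inter π X).symm
    refine ⟨π ∩ X, Finset.inter_subset_right, ?_, ?_, ?_⟩
    · exact hcard ▸ Finset.card_le_card hsub
    · intro h
      exact le_trans (Finset.card_le_card
        (Finset.filter_subset_filter _ hsub)) (hub h)
    · refine ⟨(π \ X).subtype (· ∉ X), ?_, ?_, ?_⟩
      · rintro ⟨v, hv⟩ hmem h
        rw [Finset.mem_subtype] at hmem
        exact hempty v (Finset.mem_sdiff.mp hmem).1 h
      · rw [Finset.card_subtype, Finset.filter_true_of_mem
          (fun v hv => (Finset.mem_sdiff.mp hv).2),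
          ← Finset.sdiff_inter_self_left,
          Finset.card_sdiff_of_subset Finset.inter_subset_left, hcard]
      · intro h
        have hc : (((π \ X).subtype (· ∉ X)).filter
            (fun v => G'.Adj (ι' h) v)).card =
            ((π \ X).filter (fun v => G.Adj (ι h) v)).card := by
          apply Finset.card_bij (fun v _ => v.1)
          · rintro ⟨v, hv⟩ hmem
            rw [Finset.mem_filter, Finset.mem_subtype] at hmem
            rw [Finset.mem_filter]
            exact ⟨hmem.1, (hadj h _).mp hmem.2⟩
          · rintro ⟨a, _⟩ _ ⟨b, _⟩ _ hab
            simpa using hab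
          · intro b hb
            rw [Finset.mem_filter] at hb
            have hbX : b ∉ X := (Finset.mem_sdiff.mp hb.1).2
            refine ⟨⟨b, hbX⟩, ?_, rfl⟩
            rw [Finset.mem_filter, Finset.mem_subtype]
            exact ⟨hb.1, (hadj h _).mpr hb.2⟩
        rw [hc]
        have := hub h
        rw [hsplit h] at this
        omega
  · rintro ⟨S, hSX, hSR, hSub, π', hπ'empty, hπ'card, hπ'ub⟩
    have hdisj : Disjoint S (π'.image Subtype.val) := by
      rw [Finset.disjoint_right]
      intro v hv hvS
      rw [Finset.mem_image] at hv
      obtain ⟨⟨w, hw⟩, _, rfl⟩ := hv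
      exact hw (hSX hvS)
    refine ⟨S ∪ π'.image Subtype.val, ?_, ?_, ?_⟩
    · intro v hv h
      rcases Finset.mem_union.mp hv with hv | hv
      · exact hX v (hSX hv) h
      · rw [Finset.mem_image] at hv
        obtain ⟨⟨w, hw⟩, hwm, rfl⟩ := hv
        exact hπ'empty _ hwm h
    · rw [Finset.card_union_of_disjoint hdisj,
        Finset.card_image_of_injective _ Subtype.val_injective, hπ'card]
      omega
    · intro h
      rw [Finset.filter_union, Finset.card_union_of_disjoint
        (Finset.disjoint_filter_filter hdisj)]
      have hc : ((π'.image Subtype.val).filter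
          (fun v => G.Adj (ι h) v)).card =
          (π'.filter (fun v => G'.Adj (ι' h) v)).card := by
        rw [Finset.filter_image, Finset.card_image_of_injective _
          Subtype.val_injective]
        congr 1
        apply Finset.filter_congr
        intro v _
        simp [hadj h v, Function.comp]
      rw [hc]
      have h1 := hπ'ub h
      have h2 := hSub h
      omega
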